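/- (Theorem 4, underestimation.) In the finite tabular setting, let (P, r) be the true model, (P_D, r_D) an empirical model, π a policy with activity matrix Aπ, π̂β a policy with π̂β(a|s) > 0 for all s, a, γ ∈ [0,1), α > 0, and w : S → ℝ nonnegative. Define DisCQL(s) := ∑_a π(a|s)·(π(a|s)/π̂β(a|s) − 1) and e(s,a) := w(s)·(π(a|s) − π̂β(a|s))/π̂β(a|s). Let Q̂^π be the unique fixed point of Q ↦ r_D + γ·P_D·Aπ·Q − α·e, set V̂^π(s) := ∑_a π(a|s)·Q̂^π(s,a), and let V^π := (I − γAπP)⁻¹(Aπ r). Suppose u : S → ℝ is nonnegative and |(Aπ(r_D − r) + γ·Aπ(P_D − P)·V^π)(s)| ≤ u(s) for every s. Then for every state s, V̂^π(s) ≤ V^π(s) − α·w(s)·DisCQL(s) + ((I − γAπP_D)⁻¹ u)(s). In particular, if moreover α·w(s)·DisCQL(s) ≥ ((I − γAπP_D)⁻¹ u)(s) for all s, then V̂^π(s) ≤ V^π(s) for all s. -/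

import Mathlib

open Matrix Finset

/-- The activity matrix `Aπ` of a policy `π`: `Aπ s (s', a) = π s a` if `s' = s`, else `0`. -/
def actMat {S A : Type*} [DecidableEq S] (π : S → A → ℝ) : Matrix S (S × A) ℝ :=
  Matrix.of fun s p => if p.1 = s then π s p.2 else 0

/-- The value vector `V^π = (I − γ Aπ P)⁻¹ (Aπ r)`. -/
noncomputable def valVec {S A : Type*} [Fintype S] [Fintype A] [DecidableEq S]
    (γ : ℝ) (P : Matrix (S × A) S ℝ) (r : S × A → ℝ) (π : S → A → ℝ) : S → ℝ :=
  (1 - γ • (actMat π * P))⁻¹.mulVec ((actMat π).mulVec r)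

/-- The discounted occupancy row vector `d^π = ρᵀ (I − γ Aπ P)⁻¹`. -/
noncomputable def occVec {S A : Type*} [Fintype S] [Fintype A] [DecidableEq S]
    (γ : ℝ) (P : Matrix (S × A) S ℝ) (ρ : S → ℝ) (π : S → A → ℝ) : S → ℝ :=
  Matrix.vecMul ρ (1 - γ • (actMat π * P))⁻¹

/-- The normalized discounted occupancy `(1 − γ)·ρᵀ (I − γ Aπ P)⁻¹`. -/
noncomputable def noccVec {S A : Type*} [Fintype S] [Fintype A] [DecidableEq S]
    (γ : ℝ) (P : Matrix (S × A) S ℝ) (ρ : S → ℝ) (π : S → A → ℝ) : S → ℝ :=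
  fun s => (1 - γ) * Matrix.vecMul ρ (1 - γ • (actMat π * P))⁻¹ s



lemma stoch_isUnit_det {S : Type*} [Fintype S] [Nonempty S] [DecidableEq S]
    (N : Matrix S S ℝ) (hN0 : ∀ i j, 0 ≤ N i j) (hN1 : ∀ i, ∑ j, N i j = 1)
    (γ : ℝ) (hγ0 : 0 ≤ γ) (hγ1 : γ < 1) : IsUnit (1 - γ • N).det := by
  rw [isUnit_iff_ne_zero]
  intro hdet
  obtain ⟨v, hv, hMv⟩ := Matrix.exists_mulVec_eq_zero_iff.2 hdet
  obtain ⟨i, -, hi⟩ := Finset.exists_max_image Finset.univ (fun j => |v j|) univ_nonempty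
  have hvi : ∀ j, v j = γ * (N *ᵥ v) j := by
    intro j
    have := congrFun hMv j
    simp only [Matrix.sub_mulVec, Matrix.one_mulVec, Matrix.smul_mulVec,
      Pi.sub_apply, Pi.smul_apply, smul_eq_mul, Pi.zero_apply, sub_eq_zero] at this
    exact this
  have h1 : |v i| ≤ γ * |v i| := by
    calc |v i| = γ * |(N *ᵥ v) i| := by rw [hvi i, abs_mul, abs_of_nonneg hγ0]
    _ ≤ γ * |v i| := by
        refine mul_le_mul_of_nonneg_left ?_ hγ0
        calc |(N *ᵥ v) i| ≤ ∑ j, |N i j * v j| := Finset.abs_sum_le_sum_abs _ _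
        _ ≤ ∑ j, N i j * |v i| := by
            refine Finset.sum_le_sum fun j _ => ?_
            rw [abs_mul, abs_of_nonneg (hN0 i j)]
            exact mul_le_mul_of_nonneg_left (hi j (mem_univ j)) (hN0 i j)
        _ = |v i| := by rw [← Finset.sum_mul, hN1, one_mul]
  have h2 : |v i| = 0 := by nlinarith [abs_nonneg (v i)]
  apply hv
  funext j
  have := hi j (mem_univ j)
  have : |v j| = 0 := le_antisymm (by linarith) (abs_nonneg _)
  simpa [abs_eq_zero] using this

lemma stoch_nonneg_sol {S : Type*} [Fintype S] [Nonempty S]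
    (N : Matrix S S ℝ) (hN0 : ∀ i j, 0 ≤ N i j) (hN1 : ∀ i, ∑ j, N i j = 1)
    (γ : ℝ) (hγ0 : 0 ≤ γ) (hγ1 : γ < 1) (x b : S → ℝ) (hb : ∀ i, 0 ≤ b i)
    (hx : ∀ i, x i = γ * (N *ᵥ x) i + b i) : ∀ i, 0 ≤ x i := by
  obtain ⟨i, -, hi⟩ := Finset.exists_min_image Finset.univ x univ_nonempty
  have h1 : x i ≤ (N *ᵥ x) i := by
    calc x i = ∑ j, N i j * x i := by rw [← Finset.sum_mul, hN1, one_mul]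
    _ ≤ ∑ j, N i j * x j := by
        exact Finset.sum_le_sum fun j _ =>
          mul_le_mul_of_nonneg_left (hi j (mem_univ j)) (hN0 i j)
    _ = (N *ᵥ x) i := rfl
  have h2 : γ * x i + b i ≤ x i := by
    have h := hx i
    have := mul_le_mul_of_nonneg_left h1 hγ0
    linarith
  have h3 : 0 ≤ x i := by nlinarith [hb i]
  intro j
  exact h3.trans (hi j (mem_univ j))

lemma stoch_inv_mulVec_nonneg {S : Type*} [Fintype S] [Nonempty S] [DecidableEq S]
    (N : Matrix S S ℝ) (hN0 : ∀ i j, 0 ≤ N i j) (hN1 : ∀ i, ∑ j, N i j = 1)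
    (γ : ℝ) (hγ0 : 0 ≤ γ) (hγ1 : γ < 1) (b : S → ℝ) (hb : ∀ i, 0 ≤ b i) :
    ∀ i, 0 ≤ ((1 - γ • N)⁻¹ *ᵥ b) i := by
  have hdet := stoch_isUnit_det N hN0 hN1 γ hγ0 hγ1
  set x := (1 - γ • N)⁻¹ *ᵥ b with hxdef
  have hBx : (1 - γ • N) *ᵥ x = b := by
    rw [hxdef, Matrix.mulVec_mulVec, Matrix.mul_nonsing_inv _ hdet, Matrix.one_mulVec]
  refine stoch_nonneg_sol N hN0 hN1 γ hγ0 hγ1 x b hb fun i => ?_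
  have := congrFun hBx i
  simp only [Matrix.sub_mulVec, Matrix.one_mulVec, Matrix.smul_mulVec,
    Pi.sub_apply, Pi.smul_apply, smul_eq_mul] at this
  linarith


lemma actMat_mulVec {S A : Type*} [Fintype S] [Fintype A] [DecidableEq S]
    (π : S → A → ℝ) (v : S × A → ℝ) (s : S) :
    ((actMat π) *ᵥ v) s = ∑ a, π s a * v (s, a) := by
  simp only [Matrix.mulVec, dotProduct, actMat, Matrix.of_apply]
  rw [Fintype.sum_prod_type]
  rw [Finset.sum_eq_single s]
  · simp
  · intro t _ hts; simp [hts]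
  · simp

lemma actMat_mul_apply {S A : Type*} [Fintype S] [Fintype A] [DecidableEq S]
    (π : S → A → ℝ) (P : Matrix (S × A) S ℝ) (i j : S) :
    (actMat π * P) i j = ∑ a, π i a * P (i, a) j := by
  rw [Matrix.mul_apply]
  exact actMat_mulVec π (fun p => P p j) i

/-- Theorem 4, underestimation. Let `Q̂^π` be the fixed point of the
SA-CQL Q-update `Q ↦ r_D + γ P_D Aπ Q − α e` with penalty
`e(s,a) = w(s)(π(a|s) − π̂β(a|s))/π̂β(a|s)`, and let `u` bound the empirical Bellman residual.
Then `V̂^π(s) ≤ V^π(s) − α w(s) DisCQL(s) + ((I − γAπP_D)⁻¹ u)(s)` for all `s`; in particular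
if `α w DisCQL` pointwise dominates `(I − γAπP_D)⁻¹ u` then `V̂^π ≤ V^π` pointwise. -/
theorem sa_cql_underestimation {S A : Type*} [Fintype S] [Fintype A]
    [Nonempty S] [Nonempty A] [DecidableEq S]
    (P PD : Matrix (S × A) S ℝ)
    (hP0 : ∀ p s, 0 ≤ P p s) (hP1 : ∀ p, ∑ s, P p s = 1)
    (hPD0 : ∀ p s, 0 ≤ PD p s) (hPD1 : ∀ p, ∑ s, PD p s = 1)
    (r rD : S × A → ℝ)
    (π πβ : S → A → ℝ) (hπ0 : ∀ s a, 0 ≤ π s a) (hπ1 : ∀ s, ∑ a, π s a = 1)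
    (hπβ0 : ∀ s a, 0 < πβ s a) (hπβ1 : ∀ s, ∑ a, πβ s a = 1)
    (γ : ℝ) (hγ0 : 0 ≤ γ) (hγ1 : γ < 1)
    (α : ℝ) (hα : 0 < α) (w : S → ℝ) (hw : ∀ s, 0 ≤ w s)
    (Qhat : S × A → ℝ)
    (hQhat : ∀ p : S × A, Qhat p = rD p + γ * PD.mulVec ((actMat π).mulVec Qhat) p
        - α * (w p.1 * (π p.1 p.2 - πβ p.1 p.2) / πβ p.1 p.2))
    (u : S → ℝ) (hu0 : ∀ s, 0 ≤ u s)
    (hub : ∀ s, |((actMat π).mulVec (rD - r)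
        + γ • (actMat π).mulVec ((PD - P).mulVec (valVec γ P r π))) s| ≤ u s) :
    (∀ s, ∑ a, π s a * Qhat (s, a)
        ≤ valVec γ P r π s - α * w s * (∑ a, π s a * (π s a / πβ s a - 1))
          + (1 - γ • (actMat π * PD))⁻¹.mulVec u s) ∧
    ((∀ s, (1 - γ • (actMat π * PD))⁻¹.mulVec u s
        ≤ α * w s * (∑ a, π s a * (π s a / πβ s a - 1))) →
      ∀ s, ∑ a, π s a * Qhat (s, a) ≤ valVec γ P r π s) := by
  classical
  set M := actMat π with hM
  set V : S → ℝ := valVec γ P r π with hV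
  set Vh : S → ℝ := fun s => ∑ a, π s a * Qhat (s, a) with hVh
  set D : S → ℝ := fun s => ∑ a, π s a * (π s a / πβ s a - 1) with hD
  set c : S → ℝ := fun s => w s * D s with hc
  -- nonnegativity of M entries
  have hM0 : ∀ i p, 0 ≤ M i p := by
    intro i p
    simp only [hM, actMat, Matrix.of_apply]
    split <;> simp [hπ0]
  -- row-stochasticity of M * P and M * PD
  have hstoch : ∀ (T : Matrix (S × A) S ℝ), (∀ p s, 0 ≤ T p s) → (∀ p, ∑ s, T p s = 1) →
      (∀ i j, 0 ≤ (M * T) i j) ∧ (∀ i, ∑ j, (M * T) i j = 1) := by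
    intro T hT0 hT1
    constructor
    · intro i j
      rw [hM, actMat_mul_apply]
      exact Finset.sum_nonneg fun a _ => mul_nonneg (hπ0 i a) (hT0 _ j)
    · intro i
      simp only [hM, actMat_mul_apply]
      rw [Finset.sum_comm]
      calc ∑ a, ∑ j, π i a * T (i, a) j = ∑ a, π i a * ∑ j, T (i, a) j := by
            simp [Finset.mul_sum]
      _ = 1 := by simp only [hT1, mul_one]; exact hπ1 i
  obtain ⟨hN0, hN1⟩ := hstoch P hP0 hP1
  obtain ⟨hND0, hND1⟩ := hstoch PD hPD0 hPD1
  have hdetP : IsUnit (1 - γ • (M * P)).det := stoch_isUnit_det _ hN0 hN1 γ hγ0 hγ1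
  have hdetD : IsUnit (1 - γ • (M * PD)).det := stoch_isUnit_det _ hND0 hND1 γ hγ0 hγ1
  set BD : Matrix S S ℝ := 1 - γ • (M * PD) with hBD
  -- expansion of BD *ᵥ x
  have hBDv : ∀ (x : S → ℝ) (s : S), (BD *ᵥ x) s = x s - γ * ((M * PD) *ᵥ x) s := by
    intro x s
    simp [hBD, Matrix.sub_mulVec, Matrix.one_mulVec, Matrix.smul_mulVec]
  -- V̂ = M *ᵥ Qhat
  have hVhM : M *ᵥ Qhat = Vh := funext fun s => actMat_mulVec π Qhat s
  -- E1 : Bellman equation for V̂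
  have hE1 : ∀ s, Vh s = (M *ᵥ rD) s + γ * ((M * PD) *ᵥ Vh) s - α * c s := by
    intro s
    have h1 : Vh s = ∑ a, π s a * (rD (s, a) + γ * (PD *ᵥ (M *ᵥ Qhat)) (s, a)
        - α * (w s * (π s a - πβ s a) / πβ s a)) := by
      simp only [hVh]
      exact Finset.sum_congr rfl fun a _ => by rw [hQhat (s, a)]
    have h2 : ∀ a, π s a * (rD (s, a) + γ * (PD *ᵥ (M *ᵥ Qhat)) (s, a)
        - α * (w s * (π s a - πβ s a) / πβ s a))
        = π s a * rD (s, a) + γ * (π s a * (PD *ᵥ Vh) (s, a))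
          - α * (w s * (π s a * (π s a / πβ s a - 1))) := by
      intro a
      rw [hVhM]
      have hne := (hπβ0 s a).ne'
      field_simp
    rw [h1]
    simp only [h2]
    rw [Finset.sum_sub_distrib, Finset.sum_add_distrib, ← Finset.mul_sum, ← Finset.mul_sum,
      ← Finset.mul_sum]
    have e1 : ∑ a, π s a * rD (s, a) = (M *ᵥ rD) s := (actMat_mulVec π rD s).symm
    have e2 : ∑ a, π s a * (PD *ᵥ Vh) (s, a) = ((M * PD) *ᵥ Vh) s := by
      rw [← Matrix.mulVec_mulVec]
      exact (actMat_mulVec π (PD *ᵥ Vh) s).symm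
    rw [e1, e2, hc]
  -- E2 : Bellman equation for V
  have hE2 : ∀ s, V s = (M *ᵥ r) s + γ * ((M * P) *ᵥ V) s := by
    have hBV : (1 - γ • (M * P)) *ᵥ V = M *ᵥ r := by
      rw [hV, valVec, ← hM, Matrix.mulVec_mulVec, Matrix.mul_nonsing_inv _ hdetP,
        Matrix.one_mulVec]
    intro s
    have := congrFun hBV s
    simp only [Matrix.sub_mulVec, Matrix.one_mulVec, Matrix.smul_mulVec,
      Pi.sub_apply, Pi.smul_apply, smul_eq_mul] at this
    linarith
  -- the residual
  set Δ : S → ℝ := (M *ᵥ (rD - r)) + γ • (M *ᵥ ((PD - P) *ᵥ V)) with hΔ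
  have hΔs : ∀ s, Δ s = (M *ᵥ rD) s - (M *ᵥ r) s
      + γ * (((M * PD) *ᵥ V) s - ((M * P) *ᵥ V) s) := by
    intro s
    have e3 : M *ᵥ ((PD - P) *ᵥ V) = (M * PD) *ᵥ V - (M * P) *ᵥ V := by
      rw [Matrix.mulVec_mulVec, Matrix.mul_sub, Matrix.sub_mulVec]
    have e4 : M *ᵥ (rD - r) = M *ᵥ rD - M *ᵥ r := Matrix.mulVec_sub M rD r
    simp only [hΔ, e3, e4, Pi.add_apply, Pi.sub_apply, Pi.smul_apply, smul_eq_mul]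
    try ring
  -- E3 : BD (V̂ − V) = Δ − α c
  set z : S → ℝ := Vh - V with hz
  have hE3 : BD *ᵥ z = fun s => Δ s - α * c s := by
    funext s
    have hmz : ((M * PD) *ᵥ z) s = ((M * PD) *ᵥ Vh) s - ((M * PD) *ᵥ V) s := by
      rw [hz, Matrix.mulVec_sub, Pi.sub_apply]
    rw [hBDv z s, hmz, hΔs s]
    have := hE1 s
    have := hE2 s
    simp only [hz, Pi.sub_apply]
    linarith
  -- solve for z
  have hzeq : z = BD⁻¹ *ᵥ (fun s => Δ s - α * c s) := by
    rw [← hE3, Matrix.mulVec_mulVec, Matrix.nonsing_inv_mul _ hdetD, Matrix.one_mulVec]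
  have hzsplit : ∀ s, z s = (BD⁻¹ *ᵥ Δ) s - α * (BD⁻¹ *ᵥ c) s := by
    intro s
    have : (fun s => Δ s - α * c s) = Δ - α • c := by
      funext t; simp [smul_eq_mul]
    rw [hzeq, this, Matrix.mulVec_sub]
    simp [Matrix.mulVec_smul]
  -- DisCQL nonnegativity
  have hD0 : ∀ s, 0 ≤ D s := by
    intro s
    have key := Finset.sum_mul_sq_le_sq_mul_sq Finset.univ
      (fun a => π s a / Real.sqrt (πβ s a)) (fun a => Real.sqrt (πβ s a))
    have e5 : ∀ a : A, π s a / Real.sqrt (πβ s a) * Real.sqrt (πβ s a) = π s a := by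
      intro a
      rw [div_mul_cancel₀]
      exact (Real.sqrt_pos.2 (hπβ0 s a)).ne'
    have e6 : ∀ a : A, (π s a / Real.sqrt (πβ s a)) ^ 2 = π s a ^ 2 / πβ s a := by
      intro a
      rw [div_pow, Real.sq_sqrt (hπβ0 s a).le]
    have e7 : ∀ a : A, Real.sqrt (πβ s a) ^ 2 = πβ s a := fun a =>
      Real.sq_sqrt (hπβ0 s a).le
    simp only [e5, e6, e7, hπ1 s, hπβ1 s, one_pow, mul_one] at key
    have e8 : D s = (∑ a, π s a ^ 2 / πβ s a) - 1 := by
      rw [hD]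
      have : ∀ a : A, π s a * (π s a / πβ s a - 1) = π s a ^ 2 / πβ s a - π s a := by
        intro a; rw [mul_sub, mul_one, pow_two, mul_div_assoc]
      simp only [this]
      rw [Finset.sum_sub_distrib, hπ1 s]
    rw [e8]
    linarith
  have hc0 : ∀ s, 0 ≤ c s := fun s => mul_nonneg (hw s) (hD0 s)
  -- BD⁻¹ Δ ≤ BD⁻¹ u
  have h4 : ∀ s, (BD⁻¹ *ᵥ Δ) s ≤ (BD⁻¹ *ᵥ u) s := by
    have hnn := stoch_inv_mulVec_nonneg (M * PD) hND0 hND1 γ hγ0 hγ1 (u - Δ)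
      (fun s => by
        have h := abs_le.1 (hub s)
        simp only [Pi.sub_apply]
        linarith [h.2])
    intro s
    have := hnn s
    rw [Matrix.mulVec_sub] at this
    simp only [Pi.sub_apply] at this
    linarith
  -- c ≤ BD⁻¹ c
  have h5 : ∀ s, c s ≤ (BD⁻¹ *ᵥ c) s := by
    set y : S → ℝ := BD⁻¹ *ᵥ c with hy
    have hBy : BD *ᵥ y = c := by
      rw [hy, Matrix.mulVec_mulVec, Matrix.mul_nonsing_inv _ hdetD, Matrix.one_mulVec]
    have hyeq : ∀ s, y s = γ * ((M * PD) *ᵥ y) s + c s := by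
      intro s
      have := congrFun hBy s
      rw [hBDv y s] at this
      linarith
    have hy0 : ∀ s, 0 ≤ y s := stoch_nonneg_sol (M * PD) hND0 hND1 γ hγ0 hγ1 y c hc0 hyeq
    intro s
    have hMy : 0 ≤ ((M * PD) *ᵥ y) s :=
      Finset.sum_nonneg fun j _ => mul_nonneg (hND0 s j) (hy0 j)
    have := hyeq s
    nlinarith
  -- main bound
  have main : ∀ s, Vh s ≤ V s - α * c s + ((1 - γ • (M * PD))⁻¹ *ᵥ u) s := by
    intro s
    have hzs := hzsplit s
    simp only [hz, Pi.sub_apply] at hzs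
    have h4s := h4 s
    have h5s := mul_le_mul_of_nonneg_left (h5 s) hα.le
    rw [← hBD]
    linarith
  constructor
  · intro s
    have e1 : (∑ a, π s a * Qhat (s, a)) = Vh s := rfl
    have e2 : (∑ a, π s a * (π s a / πβ s a - 1)) = D s := rfl
    rw [e1, e2]
    have h := main s
    simp only [hc] at h
    have : α * (w s * D s) = α * w s * D s := by ring
    linarith
  · intro hdom s
    have e1 : (∑ a, π s a * Qhat (s, a)) = Vh s := rfl
    have e2 : (∑ a, π s a * (π s a / πβ s a - 1)) = D s := rfl
    rw [e1]
    have h := main s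
    simp only [hc] at h
    have h2 := hdom s
    rw [e2] at h2
    have : α * (w s * D s) = α * w s * D s := by ring
    linarith
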